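/- Let 0 < K₁ < K₂, let u₁ be a solution of the ODE with constant K₁ and u₂ a solution with constant K₂, both with initial conditions u(0) = 1, u'(0⁺) = 0. If t₀ > 0 is such that u₁ > 0 and u₂ > 0 on [0, t₀), then for all t ∈ (0, t₀) one has u₁'(t)/u₁(t) < u₂'(t)/u₂(t). -/

import Mathlib

open Real Filter Topology Set

noncomputable section

/-- `u` is a solution of the ODE `u'' + ((n−1)/t)·u' + (C·φ(t) − K)·u = 0` on `(0,∞)`,
continuous on `[0,∞)`, C² on `(0,∞)`, with `u(0) = 1` and `u'(t) → 0` as `t → 0⁺`. -/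
def ODESol (n : ℕ) (C K : ℝ) (φ u : ℝ → ℝ) : Prop :=
  ContinuousOn u (Ici 0) ∧ ContDiffOn ℝ 2 u (Ioi 0) ∧ u 0 = 1 ∧
  Tendsto (deriv u) (𝓝[>] (0 : ℝ)) (𝓝 0) ∧
  ∀ t : ℝ, 0 < t →
    deriv (deriv u) t + (((n : ℝ) - 1) / t) * deriv u t + (C * φ t - K) * u t = 0

/-- Hypotheses on the potential `φ`: C¹ on `[0,∞)`, positive on `[0,∞)`,
with `φ' < 0` on `(0,∞)`, and `φ(t) → 0` as `t → ∞`. -/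
def PhiHyp (φ : ℝ → ℝ) : Prop :=
  ContDiffOn ℝ 1 φ (Ici 0) ∧ (∀ t : ℝ, 0 ≤ t → 0 < φ t) ∧
  (∀ t : ℝ, 0 < t → deriv φ t < 0) ∧ Tendsto φ atTop (𝓝 0)

/-- Sturm comparison.
If `0 < K₁ < K₂`, `u₁` solves the ODE with constant `K₁` and `u₂` with constant `K₂`
(both with `u(0) = 1`, `u'(0⁺) = 0`), and both are positive on `[0, t₀)`, then
`u₁'(t)/u₁(t) < u₂'(t)/u₂(t)` for all `t ∈ (0, t₀)`. -/
theorem ODE_sturm_comparison {n : ℕ} (hn : 2 ≤ n) (C K₁ K₂ : ℝ) (hC : 0 < C)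
    (hK₁ : 0 < K₁) (hK : K₁ < K₂)
    (φ : ℝ → ℝ) (hφ : PhiHyp φ)
    (u₁ u₂ : ℝ → ℝ) (hu₁ : ODESol n C K₁ φ u₁) (hu₂ : ODESol n C K₂ φ u₂)
    (t₀ : ℝ) (ht₀ : 0 < t₀)
    (hpos : ∀ t : ℝ, 0 ≤ t → t < t₀ → 0 < u₁ t ∧ 0 < u₂ t) :
    ∀ t : ℝ, 0 < t → t < t₀ → deriv u₁ t / u₁ t < deriv u₂ t / u₂ t := by
  obtain ⟨hc₁, hsm₁, hz₁, hd0₁, hode₁⟩ := hu₁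
  obtain ⟨hc₂, hsm₂, hz₂, hd0₂, hode₂⟩ := hu₂
  obtain ⟨m, rfl⟩ : ∃ m, n = m + 2 := ⟨n - 2, by omega⟩
  -- regularity
  have reg : ∀ u : ℝ → ℝ, ContDiffOn ℝ 2 u (Ioi 0) →
      DifferentiableOn ℝ u (Ioi 0) ∧ DifferentiableOn ℝ (deriv u) (Ioi 0) := by
    intro u h
    rw [show (2 : WithTop ℕ∞) = 1 + 1 by norm_num,
      contDiffOn_succ_iff_deriv_of_isOpen isOpen_Ioi] at h
    exact ⟨h.1, h.2.2.differentiableOn one_ne_zero⟩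
  obtain ⟨hdu₁, hddu₁⟩ := reg u₁ hsm₁
  obtain ⟨hdu₂, hddu₂⟩ := reg u₂ hsm₂
  have hu₁at : ∀ t : ℝ, 0 < t → HasDerivAt u₁ (deriv u₁ t) t := fun t ht =>
    ((hdu₁ t ht).differentiableAt (isOpen_Ioi.mem_nhds ht)).hasDerivAt
  have hu₂at : ∀ t : ℝ, 0 < t → HasDerivAt u₂ (deriv u₂ t) t := fun t ht =>
    ((hdu₂ t ht).differentiableAt (isOpen_Ioi.mem_nhds ht)).hasDerivAt
  have hdu₁at : ∀ t : ℝ, 0 < t → HasDerivAt (deriv u₁) (deriv (deriv u₁) t) t := fun t ht =>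
    ((hddu₁ t ht).differentiableAt (isOpen_Ioi.mem_nhds ht)).hasDerivAt
  have hdu₂at : ∀ t : ℝ, 0 < t → HasDerivAt (deriv u₂) (deriv (deriv u₂) t) t := fun t ht =>
    ((hddu₂ t ht).differentiableAt (isOpen_Ioi.mem_nhds ht)).hasDerivAt
  -- the Wronskian-type function
  set W : ℝ → ℝ := fun t => t ^ (m + 1) * (deriv u₂ t * u₁ t - deriv u₁ t * u₂ t) with hW
  have hW0 : W 0 = 0 := by simp [hW]
  -- derivative of W on (0, t₀)
  have hWderiv : ∀ t : ℝ, 0 < t →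
      HasDerivAt W (t ^ (m + 1) * (K₂ - K₁) * u₁ t * u₂ t) t := by
    intro t ht
    have h1 : HasDerivAt (fun s : ℝ => s ^ (m + 1))
        ((m + 1 : ℕ) * t ^ m) t := hasDerivAt_pow (m + 1) t
    have h2 : HasDerivAt (fun s => deriv u₂ s * u₁ s - deriv u₁ s * u₂ s)
        ((deriv (deriv u₂) t * u₁ t + deriv u₂ t * deriv u₁ t)
          - (deriv (deriv u₁) t * u₂ t + deriv u₁ t * deriv u₂ t)) t :=
      (((hdu₂at t ht).mul (hu₁at t ht)).sub ((hdu₁at t ht).mul (hu₂at t ht)))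
    have h3 := h1.mul h2
    have e₁ := hode₁ t ht
    have e₂ := hode₂ t ht
    have hdd₁ : deriv (deriv u₁) t
        = -((((m : ℝ) + 2) - 1) / t * deriv u₁ t) - (C * φ t - K₁) * u₁ t := by
      push_cast at e₁ ⊢; linarith
    have hdd₂ : deriv (deriv u₂) t
        = -((((m : ℝ) + 2) - 1) / t * deriv u₂ t) - (C * φ t - K₂) * u₂ t := by
      push_cast at e₂ ⊢; linarith
    refine HasDerivAt.congr_deriv (f := W) h3 ?_
    rw [hdd₁, hdd₂]
    have htne : t ≠ 0 := ne_of_gt ht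
    field_simp
    push_cast
    ring
  -- W tends to 0 at 0⁺
  have hWlim : Tendsto W (𝓝[>] (0 : ℝ)) (𝓝 0) := by
    have hpow : Tendsto (fun t : ℝ => t ^ (m + 1)) (𝓝[>] (0 : ℝ)) (𝓝 0) := by
      have : Tendsto (fun t : ℝ => t ^ (m + 1)) (𝓝 (0 : ℝ)) (𝓝 ((0 : ℝ) ^ (m + 1))) :=
        (continuous_pow (m + 1)).tendsto 0
      simpa using this.mono_left nhdsWithin_le_nhds
    have hu₁lim : Tendsto u₁ (𝓝[>] (0 : ℝ)) (𝓝 1) := by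
      have := (hc₁ 0 (self_mem_Ici)).tendsto
      rw [hz₁] at this
      exact this.mono_left (nhdsWithin_mono _ Ioi_subset_Ici_self)
    have hu₂lim : Tendsto u₂ (𝓝[>] (0 : ℝ)) (𝓝 1) := by
      have := (hc₂ 0 (self_mem_Ici)).tendsto
      rw [hz₂] at this
      exact this.mono_left (nhdsWithin_mono _ Ioi_subset_Ici_self)
    have : Tendsto (fun t => deriv u₂ t * u₁ t - deriv u₁ t * u₂ t)
        (𝓝[>] (0 : ℝ)) (𝓝 (0 * 1 - 0 * 1)) :=
      (hd0₂.mul hu₁lim).sub (hd0₁.mul hu₂lim)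
    simpa using hpow.mul this
  -- W is strictly monotone on Ico 0 t₀
  have hWmono : StrictMonoOn W (Ico 0 t₀) := by
    apply strictMonoOn_of_deriv_pos (convex_Ico 0 t₀)
    · intro x hx
      rcases eq_or_lt_of_le hx.1 with h | h
      · -- continuity at 0 within
        subst h
        have hIoi : ContinuousWithinAt W (Ioi 0) 0 := by
          rw [ContinuousWithinAt, hW0]; exact hWlim
        have hIci : ContinuousWithinAt W (Ici 0) 0 := by
          rw [show Ici (0:ℝ) = insert 0 (Ioi 0) by
            rw [Ioi_insert]]
          exact hIoi.insert
        exact hIci.mono Ico_subset_Ici_self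
      · exact ((hWderiv x h).continuousAt).continuousWithinAt
    · intro x hx
      rw [interior_Ico] at hx
      rw [(hWderiv x hx.1).deriv]
      have hp := hpos x hx.1.le hx.2
      exact mul_pos (mul_pos (mul_pos (pow_pos hx.1 _) (sub_pos.mpr hK)) hp.1) hp.2
  intro t ht htt₀
  have hWt : 0 < W t := by
    have := hWmono ⟨le_refl 0, ht₀⟩ ⟨ht.le, htt₀⟩ ht
    rwa [hW0] at this
  have hp := hpos t ht.le htt₀
  rw [div_lt_div_iff₀ hp.1 hp.2]
  have hpow : 0 < t ^ (m + 1) := pow_pos ht _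
  have hWt' : 0 < t ^ (m + 1) * (deriv u₂ t * u₁ t - deriv u₁ t * u₂ t) := hWt
  nlinarith [hWt', hpow]
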